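/- Let P be a pseudotree (a connected graph with at most one cycle) and Z a set of vertices such that α(P) > α(P - Z). Then there exist three (possibly non-distinct) vertices u, v, w ∈ Z ∩ V(P) such that α(P) > α(P - {u, v, w}). -/

import Mathlib

open SimpleGraph

/-- The maximum size of an independent set of `G` contained in the vertex set `A`
(i.e. the independence number of the induced subgraph `G[A]`). -/
noncomputable def alphaOn {V : Type*} [Fintype V] (G : SimpleGraph V) (A : Set V) : ℕ :=
  sSup {n | ∃ s : Finset V, ↑s ⊆ A ∧ (↑s : Set V).Pairwise (fun a b => ¬ G.Adj a b) ∧ s.card = n}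

/-- The open neighborhood of a set of vertices. -/
def nbhd {V : Type*} (G : SimpleGraph V) (S : Set V) : Set V :=
  {v | v ∉ S ∧ ∃ u ∈ S, G.Adj u v}

/-- `v` is α-critical in the induced subgraph `G[A]`. -/
def critOn {V : Type*} [Fintype V] (G : SimpleGraph V) (A : Set V) (v : V) : Prop :=
  alphaOn G A = 1 + alphaOn G (A \ {v})

/-- For a tree `T` rooted at `r`, the vertex set of the subtree rooted at `a`:
those vertices reachable from `a` without passing through `r`. -/
def descend {V : Type*} (T : SimpleGraph V) (r a : V) : Set V :=
  {v | ∃ p : T.Walk a v, r ∉ p.support}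

/-- The connected component of `v₀` in `G - X`: vertices reachable from `v₀` avoiding `X`. -/
def avoidComp {V : Type*} (G : SimpleGraph V) (X : Set V) (v₀ : V) : Set V :=
  {v | ∃ p : G.Walk v₀ v, ∀ x ∈ p.support, x ∉ X}

set_option linter.unusedSectionVars false
set_option maxHeartbeats 1000000

section Basics
variable {V : Type*} [Fintype V] {G : SimpleGraph V} {A B : Set V}

/-- Independence predicate matching `alphaOn`. -/
def IndepF {V : Type*} (G : SimpleGraph V) (s : Finset V) : Prop :=
  (↑s : Set V).Pairwise (fun a b => ¬ G.Adj a b)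

lemma indepF_not_adj {s : Finset V} (hs : IndepF G s) {u v : V}
    (hu : u ∈ s) (hv : v ∈ s) (h : G.Adj u v) : False :=
  hs (by exact_mod_cast hu) (by exact_mod_cast hv) h.ne h

lemma alphaOn_bddAbove :
    BddAbove {n | ∃ s : Finset V, ↑s ⊆ A ∧ (↑s : Set V).Pairwise (fun a b => ¬ G.Adj a b) ∧ s.card = n} := by
  refine ⟨Fintype.card V, ?_⟩
  rintro n ⟨s, -, -, rfl⟩
  exact s.card_le_univ

lemma le_alphaOn {s : Finset V} (hsub : ↑s ⊆ A) (hind : IndepF G s) :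
    s.card ≤ alphaOn G A :=
  le_csSup alphaOn_bddAbove ⟨s, hsub, hind, rfl⟩

lemma alphaOn_exists :
    ∃ s : Finset V, ↑s ⊆ A ∧ IndepF G s ∧ s.card = alphaOn G A := by
  have hne : {n | ∃ s : Finset V, ↑s ⊆ A ∧ (↑s : Set V).Pairwise (fun a b => ¬ G.Adj a b) ∧ s.card = n}.Nonempty :=
    ⟨0, ∅, by simp, by simp [Set.Pairwise], by simp⟩
  exact Nat.sSup_mem hne alphaOn_bddAbove

lemma alphaOn_mono (h : A ⊆ B) : alphaOn G A ≤ alphaOn G B := by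
  obtain ⟨s, hsub, hind, hcard⟩ := alphaOn_exists (G := G) (A := A)
  rw [← hcard]
  exact le_alphaOn (hsub.trans h) hind

/-- Independent sets of full size must meet any "reducing" finset `W`. -/
lemma meets_of_reducing {W : Finset V} (hW : alphaOn G (↑W : Set V)ᶜ < alphaOn G Set.univ)
    {s : Finset V} (hind : IndepF G s) (hcard : s.card = alphaOn G Set.univ) :
    ∃ v, v ∈ s ∧ v ∈ W := by
  by_contra hc
  push_neg at hc
  have hsub : (↑s : Set V) ⊆ (↑W : Set V)ᶜ := by
    intro v hv
    simp only [Set.mem_compl_iff, Finset.mem_coe]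
    exact hc v (by exact_mod_cast hv)
  have := le_alphaOn (G := G) hsub hind
  omega

end Basics

section Swap
variable {V : Type*} [Fintype V] {G : SimpleGraph V}

/-- Symmetric difference of two finsets, as a vertex set. -/
def Msd {V : Type*} (A B : Finset V) : Set V := {v | (v ∈ A ∧ v ∉ B) ∨ (v ∈ B ∧ v ∉ A)}

lemma Msd_comm {A B : Finset V} : Msd A B = Msd B A := by
  ext v; simp only [Msd, Set.mem_setOf_eq]; tauto

/-- Vertices reachable from `z` by walks staying inside `M`. -/
def Reach {V : Type*} (G : SimpleGraph V) (M : Set V) (z : V) : Set V :=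
  {v | ∃ w : G.Walk z v, ∀ x ∈ w.support, x ∈ M}

lemma reach_self {M : Set V} {z : V} (hz : z ∈ M) : z ∈ Reach G M z :=
  ⟨Walk.nil, by simpa using hz⟩

lemma reach_sub {M : Set V} {z : V} : Reach G M z ⊆ M := by
  rintro v ⟨w, hw⟩
  exact hw v w.end_mem_support

lemma reach_adj {M : Set V} {z v u : V} (hv : v ∈ Reach G M z)
    (hadj : G.Adj v u) (hu : u ∈ M) : u ∈ Reach G M z := by
  obtain ⟨w, hw⟩ := hv
  refine ⟨w.concat hadj, ?_⟩
  intro x hx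
  rw [Walk.support_concat, List.mem_append] at hx
  rcases hx with hx | hx
  · exact hw x hx
  · simp only [List.mem_singleton] at hx
    subst hx
    exact hu

lemma indep_swapped {A B : Finset V} (hA : IndepF G A) (hB : IndepF G B) {D : Set V}
    (hDM : D ⊆ Msd A B)
    (hcl : ∀ v ∈ D, ∀ u, G.Adj v u → u ∈ Msd A B → u ∈ D)
    [DecidableEq V] [DecidablePred (· ∈ D)] :
    IndepF G (A.filter (· ∉ D) ∪ B.filter (· ∈ D)) := by
  intro u hu v hv hne hadj
  simp only [Finset.coe_union, Set.mem_union, Finset.coe_filter, Set.mem_setOf_eq] at hu hv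
  rcases hu with ⟨huA, huD⟩ | ⟨huB, huD⟩ <;> rcases hv with ⟨hvA, hvD⟩ | ⟨hvB, hvD⟩
  · exact indepF_not_adj hA huA hvA hadj
  · by_cases h : u ∈ B
    · exact indepF_not_adj hB h hvB hadj
    · exact huD (hcl v hvD u hadj.symm (Or.inl ⟨huA, h⟩))
  · by_cases h : v ∈ B
    · exact indepF_not_adj hB huB h hadj
    · exact hvD (hcl u huD v hadj (Or.inl ⟨hvA, h⟩))
  · exact indepF_not_adj hB huB hvB hadj

/-- The swap lemma: swapping the reach-component of `z` between two maximum
independent sets yields a maximum independent set. -/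
lemma swap_lemma {A B : Finset V} (hA : IndepF G A) (hB : IndepF G B)
    (hcA : A.card = alphaOn G Set.univ) (hcB : B.card = alphaOn G Set.univ)
    {z : V} (hzA : z ∈ A) (hzB : z ∉ B) :
    ∃ A' : Finset V, IndepF G A' ∧ A'.card = alphaOn G Set.univ ∧
      ∀ v, v ∈ A' ↔ ((v ∈ A ∧ v ∉ Reach G (Msd A B) z) ∨ (v ∈ B ∧ v ∈ Reach G (Msd A B) z)) := by
  classical
  set D : Set V := Reach G (Msd A B) z with hD
  have hDM : D ⊆ Msd A B := reach_sub
  have hcl : ∀ v ∈ D, ∀ u, G.Adj v u → u ∈ Msd A B → u ∈ D := by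
    intro v hv u hadj hu
    exact reach_adj hv hadj hu
  have hcl' : ∀ v ∈ D, ∀ u, G.Adj v u → u ∈ Msd B A → u ∈ D := by
    rw [← Msd_comm]; exact hcl
  set A' : Finset V := A.filter (· ∉ D) ∪ B.filter (· ∈ D) with hA'
  set B' : Finset V := B.filter (· ∉ D) ∪ A.filter (· ∈ D) with hB'
  have hiA' : IndepF G A' := indep_swapped hA hB hDM hcl
  have hiB' : IndepF G B' := indep_swapped hB hA (Msd_comm (A := A) ▸ hDM) hcl'
  have hdisjA : Disjoint (A.filter (· ∉ D)) (B.filter (· ∈ D)) := by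
    rw [Finset.disjoint_left]
    intro a ha hb
    simp only [Finset.mem_filter] at ha hb
    exact ha.2 hb.2
  have hdisjB : Disjoint (B.filter (· ∉ D)) (A.filter (· ∈ D)) := by
    rw [Finset.disjoint_left]
    intro a ha hb
    simp only [Finset.mem_filter] at ha hb
    exact ha.2 hb.2
  have hcardA' : A'.card = (A.filter (· ∉ D)).card + (B.filter (· ∈ D)).card :=
    Finset.card_union_of_disjoint hdisjA
  have hcardB' : B'.card = (B.filter (· ∉ D)).card + (A.filter (· ∈ D)).card :=
    Finset.card_union_of_disjoint hdisjB
  have hAsplit : (A.filter (· ∈ D)).card + (A.filter (· ∉ D)).card = A.card :=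
    Finset.card_filter_add_card_filter_not _
  have hBsplit : (B.filter (· ∈ D)).card + (B.filter (· ∉ D)).card = B.card :=
    Finset.card_filter_add_card_filter_not _
  have hleA : A'.card ≤ alphaOn G Set.univ := le_alphaOn (by simp) hiA'
  have hleB : B'.card ≤ alphaOn G Set.univ := le_alphaOn (by simp) hiB'
  have hcard : A'.card = alphaOn G Set.univ := by omega
  refine ⟨A', hiA', hcard, ?_⟩
  intro v
  simp only [hA', Finset.mem_union, Finset.mem_filter]

end Swap

section Parity
variable {V : Type*} [Fintype V] [DecidableEq V] {G : SimpleGraph V}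

lemma zmod2_ne {a b : ZMod 2} (h : a ≠ b) : a = b + 1 := by revert h; revert a b; decide

lemma zmod2_add_self (a : ZMod 2) : a + a = 0 := by revert a; decide

/-- Walks inside the symmetric difference of two independent sets alternate sides. -/
lemma walk_parity_side {A B : Finset V} (hA : IndepF G A) (hB : IndepF G B) :
    ∀ {u v : V} (w : G.Walk u v), (∀ x ∈ w.support, x ∈ Msd A B) →
      (w.length : ZMod 2) = (if u ∈ B then 1 else 0) + (if v ∈ B then 1 else 0) := by
  intro u v w
  induction w with
  | nil =>
    intro _
    simp only [Walk.length_nil, Nat.cast_zero]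
    rw [zmod2_add_self]
  | @cons a b d hadj p ih =>
    intro hsup
    have hmem : ∀ x ∈ p.support, x ∈ Msd A B := by
      intro x hx
      exact hsup x (by simp [hx])
    have ha : a ∈ Msd A B := hsup a (by simp)
    have hb : b ∈ Msd A B := hsup b (by simp)
    have h2 : (if a ∈ B then (1 : ZMod 2) else 0) = (if b ∈ B then 1 else 0) + 1 := by
      rcases ha with ⟨haA, haB⟩ | ⟨haB, haA⟩ <;> rcases hb with ⟨hbA, hbB⟩ | ⟨hbB, hbA⟩
      · exact absurd hadj (hA (by exact_mod_cast haA) (by exact_mod_cast hbA) hadj.ne)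
      · simp only [if_neg haB, if_pos hbB]
        decide
      · simp only [if_pos haB, if_neg hbB]
        decide
      · exact absurd hadj (hB (by exact_mod_cast haB) (by exact_mod_cast hbB) hadj.ne)
    simp only [Walk.length_cons, Nat.cast_add, Nat.cast_one, ih hmem, h2]
    ring

/-- Parity of a walk under a 2-colouring proper away from one exceptional edge. -/
lemma walk_parity_color (c : V → ZMod 2) (x y : V) (hxy : c x = c y)
    (hc : ∀ a b, G.Adj a b → (s(a,b) : Sym2 V) ≠ s(x,y) → c a ≠ c b) :
    ∀ {u v : V} (w : G.Walk u v),
      (w.length : ZMod 2) = c u + c v + ((w.edges.count s(x,y) : ℕ) : ZMod 2) := by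
  intro u v w
  induction w with
  | nil =>
    simp only [Walk.length_nil, Nat.cast_zero, Walk.edges_nil, List.count_nil]
    rw [zmod2_add_self]
    simp
  | @cons a b d hadj p ih =>
    simp only [Walk.length_cons, Walk.edges_cons, Nat.cast_add, Nat.cast_one]
    by_cases he : (s(a,b) : Sym2 V) = s(x,y)
    · have hab : c a = c b := by
        rw [Sym2.eq_iff] at he
        rcases he with ⟨rfl, rfl⟩ | ⟨rfl, rfl⟩
        · exact hxy
        · exact hxy.symm
      rw [he, List.count_cons_self]
      push_cast
      rw [ih, hab]
      ring
    · rw [List.count_cons_of_ne he]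
      have hab : c a = c b + 1 := zmod2_ne (hc a b hadj he)
      rw [ih, hab]
      ring

/-- Parity of a walk under a proper 2-colouring. -/
lemma walk_parity_proper (c : V → ZMod 2) (hc : ∀ a b, G.Adj a b → c a ≠ c b) :
    ∀ {u v : V} (w : G.Walk u v), (w.length : ZMod 2) = c u + c v := by
  intro u v w
  induction w with
  | nil =>
    simp only [Walk.length_nil, Nat.cast_zero]
    rw [zmod2_add_self]
  | @cons a b d hadj p ih =>
    have hab : c a = c b + 1 := zmod2_ne (hc a b hadj)
    simp only [Walk.length_cons, Nat.cast_add, Nat.cast_one]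
    rw [ih, hab]
    ring

end Parity

section Struct
variable {V : Type*} [Fintype V] {G : SimpleGraph V}

/-- A connected graph on `n` vertices has at least `n - 1` edges. -/
lemma conn_edge_lb (hconn : G.Connected) : Fintype.card V ≤ G.edgeSet.ncard + 1 := by
  classical
  obtain ⟨r⟩ : Nonempty V := hconn.nonempty
  have hch : ∀ v : V, v ≠ r → ∃ u : V, G.Adj v u ∧ G.dist u r < G.dist v r := by
    intro v hv
    have hreach : G.Reachable v r := hconn v r
    have hd : G.dist v r ≠ 0 := by
      rw [Ne, hreach.dist_eq_zero_iff]
      exact hv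
    obtain ⟨w, hw⟩ := hreach.exists_walk_length_eq_dist
    cases w with
    | nil => exact (hv rfl).elim
    | @cons _ u _ hadj p =>
      refine ⟨u, hadj, ?_⟩
      have h1 : G.dist u r ≤ p.length := dist_le p
      have h2 : p.length + 1 = G.dist v r := by
        simpa [Nat.add_comm] using hw
      omega
  choose nxt hnxt1 hnxt2 using hch
  have hinj : Set.InjOn (fun v : {v : V // v ≠ r} => (s(v.1, nxt v.1 v.2) : Sym2 V)) Set.univ := by
    rintro ⟨v, hv⟩ - ⟨v', hv'⟩ - h
    simp only [Sym2.eq_iff] at h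
    rcases h with ⟨h1, h2⟩ | ⟨h1, h2⟩
    · simp [h1]
    · exfalso
      have ha := hnxt2 v hv
      have hb := hnxt2 v' hv'
      rw [h2] at ha
      rw [← h1] at hb
      omega
  have hmaps : ∀ v : {v : V // v ≠ r}, (s(v.1, nxt v.1 v.2) : Sym2 V) ∈ G.edgeSet := by
    rintro ⟨v, hv⟩
    exact (hnxt1 v hv)
  have hcard : Fintype.card {v : V // v ≠ r} ≤ G.edgeSet.ncard := by
    have hfin : G.edgeSet.Finite := Set.toFinite _
    have := Set.ncard_le_ncard (s := (fun v : {v : V // v ≠ r} => (s(v.1, nxt v.1 v.2) : Sym2 V)) '' Set.univ)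
      (t := G.edgeSet) (by rintro e ⟨v, -, rfl⟩; exact hmaps v) hfin
    rwa [Set.ncard_image_of_injOn hinj, Set.ncard_univ, Nat.card_eq_fintype_card] at this
  have : Fintype.card {v : V // v ≠ r} = Fintype.card V - 1 := by
    simp [Fintype.card_subtype_compl, Fintype.card_subtype_eq]
  have hpos : 1 ≤ Fintype.card V := Fintype.card_pos_iff.mpr ⟨r⟩
  omega

/-- Deleting an edge whose endpoints stay connected preserves connectivity. -/
lemma conn_deleteEdge (hconn : G.Connected) {x y : V}
    (hre : (G.deleteEdges {s(x,y)}).Reachable x y) :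
    (G.deleteEdges {s(x,y)}).Connected := by
  have key : ∀ u v : V, G.Reachable u v → (G.deleteEdges {s(x,y)}).Reachable u v := by
    intro u v huv
    obtain ⟨w⟩ := huv
    induction w with
    | nil => exact Reachable.refl _
    | @cons a b d hadj p ih =>
      refine Reachable.trans ?_ ih
      by_cases he : (s(a,b) : Sym2 V) = s(x,y)
      · rw [Sym2.eq_iff] at he
        rcases he with ⟨rfl, rfl⟩ | ⟨rfl, rfl⟩
        · exact hre
        · exact hre.symm
      · exact Adj.reachable (by simp [deleteEdges_adj, he, hadj])
  rw [connected_iff]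
  exact ⟨fun u v => key u v (hconn u v), hconn.nonempty⟩

/-- The `i`-th edge of a walk is among its edges. -/
lemma getVert_edge_mem {u v : V} (w : G.Walk u v) :
    ∀ i, i < w.length → (s(w.getVert i, w.getVert (i+1)) : Sym2 V) ∈ w.edges := by
  induction w with
  | nil => intro i hi; simp at hi
  | @cons a b d hadj p ih =>
    intro i hi
    cases i with
    | zero =>
      simp only [Walk.getVert_zero, Walk.edges_cons]
      have : (Walk.cons hadj p).getVert 1 = b := by rw [Walk.getVert_cons_succ, Walk.getVert_zero]
      rw [this]
      exact List.mem_cons_self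
    | succ j =>
      simp only [Walk.getVert_cons_succ, Walk.edges_cons]
      refine List.mem_cons_of_mem _ (ih j ?_)
      simpa [Walk.length_cons, Nat.succ_lt_succ_iff] using hi

end Struct

section OddCyc
variable {V : Type*} [Fintype V] [DecidableEq V] {G : SimpleGraph V}

lemma oddcyc_aux : ∀ n : ℕ, ∀ (v : V) (w : G.Walk v v), w.length = n → Odd n →
    ∃ (u : V) (W : G.Walk u u), W.IsCycle ∧ Odd W.length := by
  intro n
  induction n using Nat.strong_induction_on with
  | _ n ih =>
  intro v w hlen hodd
  cases w with
  | nil =>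
    simp only [Walk.length_nil] at hlen
    subst hlen
    exact absurd hodd (by simp)
  | @cons _ b _ hadj p =>
    simp only [Walk.length_cons] at hlen
    have hpeven : Even p.length := by
      rcases hodd with ⟨k, hk⟩
      refine ⟨k, by omega⟩
    by_cases hnodup : p.support.Nodup
    · have hp : p.IsPath := Walk.isPath_def _ |>.mpr hnodup
      have hpne : p.length ≠ 0 := by
        intro h0
        cases p with
        | nil => exact hadj.ne rfl
        | cons _ _ => simp at h0
      have hedge : (s(v, b) : Sym2 V) ∉ p.edges := by
        intro hmem
        cases p with
        | nil => exact hadj.ne rfl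
        | @cons _ c _ h2 q =>
          rw [Walk.edges_cons] at hmem
          rcases List.mem_cons.mp hmem with hhd | htl
          · rw [Sym2.eq_iff] at hhd
            rcases hhd with ⟨hvb, hbc⟩ | ⟨hvc, -⟩
            · exact hadj.ne hvb
            · subst hvc
              cases q with
              | nil =>
                simp [Walk.length_cons] at hpeven
              | @cons _ e _ h3 r =>
                have hvr : v ∈ r.support := r.end_mem_support
                simp only [Walk.support_cons, List.nodup_cons] at hnodup
                exact hnodup.2.1 hvr
          · have hbq : b ∈ q.support := Walk.snd_mem_support_of_mem_edges q htl
            simp only [Walk.support_cons, List.nodup_cons] at hnodup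
            exact hnodup.1 hbq
      refine ⟨v, Walk.cons hadj p, Path.cons_isCycle ⟨p, hp⟩ hadj hedge, ?_⟩
      simpa [Walk.length_cons, hlen] using hodd
    · obtain ⟨z, hz2⟩ : ∃ z, 2 ≤ p.support.count z := by
        by_contra hc
        push_neg at hc
        exact hnodup (List.nodup_iff_count_le_one.mpr (fun a => by have := hc a; omega))
      have hzmem : z ∈ p.support := by
        by_contra hzm
        rw [List.count_eq_zero_of_not_mem hzm] at hz2
        omega
      have hspec := p.take_spec hzmem
      have hcnt1 : (p.takeUntil z hzmem).support.count z = 1 :=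
        p.count_support_takeUntil_eq_one hzmem
      have hcnt2 : 1 ≤ (p.dropUntil z hzmem).support.tail.count z := by
        have : p.support.count z =
            (p.takeUntil z hzmem).support.count z + (p.dropUntil z hzmem).support.tail.count z := by
          conv_lhs => rw [← hspec]
          rw [Walk.support_append, List.count_append]
        omega
      set q2 := p.dropUntil z hzmem with hq2
      cases hq2' : q2 with
      | nil =>
        rw [hq2'] at hcnt2
        simp at hcnt2
      | @cons _ c _ h2 r =>
        have hzr : z ∈ r.support := by
          rw [hq2'] at hcnt2
          simp only [Walk.support_cons, List.tail_cons] at hcnt2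
          by_contra hzm
          rw [List.count_eq_zero_of_not_mem hzm] at hcnt2
          omega
        set c1 : G.Walk z z := Walk.cons h2 (r.takeUntil z hzr) with hc1
        set c2 : G.Walk v v := Walk.cons hadj ((p.takeUntil z hzmem).append (r.dropUntil z hzr)) with hc2
        have hlen_r : (r.takeUntil z hzr).length + (r.dropUntil z hzr).length = r.length := by
          conv_rhs => rw [← r.take_spec hzr]
          rw [Walk.length_append]
        have hlen_p : (p.takeUntil z hzmem).length + (q2.length) = p.length := by
          conv_rhs => rw [← hspec]
          rw [Walk.length_append]
        have hlen_q2 : q2.length = r.length + 1 := by rw [hq2']; simp [Walk.length_cons]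
        have hc1len : c1.length = (r.takeUntil z hzr).length + 1 := by simp [hc1, Walk.length_cons]
        have hc2len : c2.length = (p.takeUntil z hzmem).length + (r.dropUntil z hzr).length + 1 := by
          simp [hc2, Walk.length_cons, Walk.length_append]
        have hsum : c1.length + c2.length = n := by omega
        have hc1pos : 1 ≤ c1.length := by omega
        have hc2pos : 1 ≤ c2.length := by omega
        rcases Nat.even_or_odd c1.length with hev | hod
        · have hodd2 : Odd c2.length := by
            rcases hodd with ⟨k, hk⟩; rcases hev with ⟨j, hj⟩
            exact ⟨k - j, by omega⟩
          exact ih c2.length (by omega) v c2 rfl hodd2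
        · exact ih c1.length (by omega) z c1 rfl hod

end OddCyc

section Dich
variable {V : Type*} [Fintype V] [DecidableEq V] {G : SimpleGraph V}

/-- A connected graph with no odd closed walk has a proper 2-colouring. -/
lemma coloring_of_no_odd {H : SimpleGraph V} (hconn : H.Connected)
    (hno : ∀ (v : V) (w : H.Walk v v), ¬ Odd w.length) :
    ∃ c : V → ZMod 2, ∀ a b, H.Adj a b → c a ≠ c b := by
  obtain ⟨r⟩ : Nonempty V := hconn.nonempty
  refine ⟨fun v => ((H.dist r v : ℕ) : ZMod 2), ?_⟩
  intro a b hadj hc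
  obtain ⟨pa, hpa⟩ := (hconn r a).exists_walk_length_eq_dist
  obtain ⟨pb, hpb⟩ := (hconn r b).exists_walk_length_eq_dist
  have hmod : H.dist r a % 2 = H.dist r b % 2 :=
    (ZMod.natCast_eq_natCast_iff _ _ _).mp hc
  have hoddw : Odd (pa.append (Walk.cons hadj pb.reverse)).length := by
    simp only [Walk.length_append, Walk.length_cons, Walk.length_reverse, hpa, hpb]
    have h1 := Nat.mod_two_eq_zero_or_one (H.dist r a)
    rcases h1 with h1 | h1 <;>
      · refine Nat.odd_iff.mpr ?_
        omega
  exact hno r (pa.append (Walk.cons hadj pb.reverse)) hoddw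

/-- Either a proper 2-colouring exists, or there is an odd cycle each of whose
edges admits a colouring proper everywhere else with equal endpoint colours. -/
lemma structure_dichotomy (hconn : G.Connected) (hedge : G.edgeSet.ncard ≤ Fintype.card V)
    (hnb : ¬ ∃ c : V → ZMod 2, ∀ a b, G.Adj a b → c a ≠ c b) :
    ∃ (m : ℕ) (f : ℕ → V), Odd m ∧ f m = f 0 ∧
      (∀ k, k < m → G.Adj (f k) (f (k+1))) ∧
      (∀ k, k < m → ∃ c : V → ZMod 2,
        (∀ a b, G.Adj a b → (s(a,b) : Sym2 V) ≠ s(f k, f (k+1)) → c a ≠ c b) ∧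
        c (f k) = c (f (k+1))) := by
  classical
  have hoddw : ∃ (v : V) (w : G.Walk v v), Odd w.length := by
    by_contra hc
    push_neg at hc
    exact hnb (coloring_of_no_odd hconn (by intro v w h; exact (hc v w) h))
  obtain ⟨v₀, w₀, hw₀⟩ := hoddw
  obtain ⟨u, W, hcyc, hWodd⟩ := oddcyc_aux w₀.length v₀ w₀ rfl hw₀
  refine ⟨W.length, fun k => W.getVert k, hWodd, ?_, ?_, ?_⟩
  · simp [Walk.getVert_length, Walk.getVert_zero]
  · intro k hk
    exact W.adj_getVert_succ hk
  · intro k hk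
    have hexy : (s(W.getVert k, W.getVert (k+1)) : Sym2 V) ∈ W.edges := getVert_edge_mem W k hk
    have hadjxy : G.Adj (W.getVert k) (W.getVert (k+1)) := W.adj_getVert_succ hk
    set x := W.getVert k with hx
    set y := W.getVert (k+1) with hy
    have hre : (G.deleteEdges {s(x,y)}).Reachable x y :=
      ((adj_and_reachable_delete_edges_iff_exists_cycle (G := G) (v := x) (w := y)).mpr
        ⟨u, W, hcyc, hexy⟩).2
    set T := G.deleteEdges {s(x,y)} with hT
    have hTconn : T.Connected := conn_deleteEdge hconn hre
    have hTedges : T.edgeSet = G.edgeSet \ {s(x,y)} := edgeSet_deleteEdges _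
    have hmemE : (s(x,y) : Sym2 V) ∈ G.edgeSet := hadjxy
    have hfin : G.edgeSet.Finite := Set.toFinite _
    have hTfin : T.edgeSet.Finite := Set.toFinite _
    have hTcard : T.edgeSet.ncard = G.edgeSet.ncard - 1 := by
      rw [hTedges]
      exact Set.ncard_diff_singleton_of_mem hmemE
    have hGpos : 1 ≤ G.edgeSet.ncard := by
      have h0 : 0 < G.edgeSet.ncard := (Set.ncard_pos hfin).mpr ⟨_, hmemE⟩
      omega
    have hnoT : ∀ (a : V) (w : T.Walk a a), ¬ Odd w.length := by
      intro a w hw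
      obtain ⟨b, K, hKcyc, hKodd⟩ := oddcyc_aux (G := T) w.length a w rfl hw
      have hKpos : 0 < K.length := hKodd.pos
      have hK1 : (s(K.getVert 0, K.getVert 1) : Sym2 V) ∈ K.edges := getVert_edge_mem K 0 hKpos
      have hre' : (T.deleteEdges {s(K.getVert 0, K.getVert 1)}).Reachable (K.getVert 0) (K.getVert 1) :=
        ((adj_and_reachable_delete_edges_iff_exists_cycle (G := T)).mpr ⟨b, K, hKcyc, hK1⟩).2
      have hT'conn := conn_deleteEdge hTconn hre'
      have hmem' : (s(K.getVert 0, K.getVert 1) : Sym2 V) ∈ T.edgeSet := K.adj_getVert_succ hKpos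
      have hT'card : (T.deleteEdges {s(K.getVert 0, K.getVert 1)}).edgeSet.ncard = T.edgeSet.ncard - 1 := by
        rw [edgeSet_deleteEdges]
        exact Set.ncard_diff_singleton_of_mem hmem'
      have hlb := conn_edge_lb hT'conn
      have hTpos : 1 ≤ T.edgeSet.ncard := by
        have h0 : 0 < T.edgeSet.ncard := (Set.ncard_pos hTfin).mpr ⟨_, hmem'⟩
        omega
      have hVpos : 1 ≤ Fintype.card V := Fintype.card_pos_iff.mpr ⟨a⟩
      omega
    obtain ⟨c, hc⟩ := coloring_of_no_odd hTconn hnoT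
    have hcexc : ∀ a b, G.Adj a b → (s(a,b) : Sym2 V) ≠ s(x,y) → c a ≠ c b := by
      intro a b hab hne
      refine hc a b ?_
      rw [hT, deleteEdges_adj]
      exact ⟨hab, by simpa using hne⟩
    by_cases hxy : c x = c y
    · exact ⟨c, hcexc, hxy⟩
    · exfalso
      apply hnb
      refine ⟨c, ?_⟩
      intro a b hab
      by_cases he : (s(a,b) : Sym2 V) = s(x,y)
      · rw [Sym2.eq_iff] at he
        rcases he with ⟨rfl, rfl⟩ | ⟨rfl, rfl⟩
        · exact hxy
        · exact fun h => hxy h.symm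
      · exact hcexc a b hab he

end Dich

section Main
variable {V : Type*} [Fintype V] [DecidableEq V] {P : SimpleGraph V} {W₁ : Finset V}

/-- A "private" maximum independent set for `z` relative to `W₁`. -/
structure Priv (P : SimpleGraph V) [Fintype V] (W₁ : Finset V) (z : V) (S : Finset V) : Prop where
  indep : IndepF P S
  card : S.card = alphaOn P Set.univ
  mem : z ∈ S
  only : ∀ v ∈ S, v ∈ W₁ → v = z

lemma priv_not_mem {z z' : V} {S : Finset V} (hS : Priv P W₁ z S) (hz' : z' ∈ W₁)
    (hne : z' ≠ z) : z' ∉ S := fun h => hne (hS.only z' h hz')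

lemma pair_reach (hred : alphaOn P (↑W₁ : Set V)ᶜ < alphaOn P Set.univ)
    {z z' : V} (hne : z ≠ z') (hzW : z ∈ W₁) (hz'W : z' ∈ W₁)
    {A B : Finset V} (hA : Priv P W₁ z A) (hB : Priv P W₁ z' B) :
    z' ∈ Reach P (Msd A B) z := by
  have hzB : z ∉ B := priv_not_mem hB hzW hne
  obtain ⟨A', hiA', hcA', hmemA'⟩ := swap_lemma hA.indep hB.indep hA.card hB.card hA.mem hzB
  by_contra hz'D
  have hsub : (↑A' : Set V) ⊆ (↑W₁ : Set V)ᶜ := by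
    intro v hv
    simp only [Set.mem_compl_iff, Finset.mem_coe]
    intro hvW
    rcases (hmemA' v).mp (by exact_mod_cast hv) with ⟨hvA, hvD⟩ | ⟨hvB, hvD⟩
    · apply hvD
      have hvz := hA.only v hvA hvW
      subst hvz
      exact reach_self (by exact Or.inl ⟨hA.mem, hzB⟩)
    · apply hz'D
      have hvz := hB.only v hvB hvW
      subst hvz
      exact hvD
  have := le_alphaOn hsub hiA'
  omega

lemma same_color_cross (hred : alphaOn P (↑W₁ : Set V)ᶜ < alphaOn P Set.univ)
    (c : V → ZMod 2) {x y : V} (hxy : c x = c y)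
    (hc : ∀ a b, P.Adj a b → (s(a,b) : Sym2 V) ≠ s(x,y) → c a ≠ c b)
    {z z' : V} (hne : z ≠ z') (hzW : z ∈ W₁) (hz'W : z' ∈ W₁)
    {A B : Finset V} (hA : Priv P W₁ z A) (hB : Priv P W₁ z' B)
    (hsame : c z = c z') :
    x ∈ Msd A B ∧ y ∈ Msd A B := by
  have hzB : z ∉ B := priv_not_mem hB hzW hne
  obtain ⟨w, hw⟩ := pair_reach hred hne hzW hz'W hA hB
  have hside := walk_parity_side hA.indep hB.indep w hw
  rw [if_neg hzB, if_pos hB.mem] at hside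
  have hcol := walk_parity_color c x y hxy hc w
  have hzz : c z + c z' = 0 := by rw [hsame]; exact zmod2_add_self _
  have hcount : ((w.edges.count s(x,y) : ℕ) : ZMod 2) = 1 := by
    have heq := hside.symm.trans hcol
    rw [hzz, zero_add, zero_add] at heq
    exact heq.symm
  have hne0 : w.edges.count s(x,y) ≠ 0 := by
    intro h0
    rw [h0] at hcount
    exact absurd hcount (by decide)
  have hmem : (s(x,y) : Sym2 V) ∈ w.edges := by
    by_contra hc'
    exact hne0 (List.count_eq_zero_of_not_mem hc')
  exact ⟨hw x (Walk.fst_mem_support_of_mem_edges w hmem),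
         hw y (Walk.snd_mem_support_of_mem_edges w hmem)⟩

lemma no_three_same (hred : alphaOn P (↑W₁ : Set V)ᶜ < alphaOn P Set.univ)
    (c : V → ZMod 2) {x y : V} (hxy : c x = c y)
    (hc : ∀ a b, P.Adj a b → (s(a,b) : Sym2 V) ≠ s(x,y) → c a ≠ c b)
    {z1 z2 z3 : V} (h12 : z1 ≠ z2) (h13 : z1 ≠ z3) (h23 : z2 ≠ z3)
    (hW1 : z1 ∈ W₁) (hW2 : z2 ∈ W₁) (hW3 : z3 ∈ W₁)
    {S1 S2 S3 : Finset V} (hS1 : Priv P W₁ z1 S1) (hS2 : Priv P W₁ z2 S2)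
    (hS3 : Priv P W₁ z3 S3)
    (hc12 : c z1 = c z2) (hc13 : c z1 = c z3) : False := by
  have hx12 := (same_color_cross hred c hxy hc h12 hW1 hW2 hS1 hS2 hc12).1
  have hx13 := (same_color_cross hred c hxy hc h13 hW1 hW3 hS1 hS3 hc13).1
  have hx23 := (same_color_cross hred c hxy hc h23 hW2 hW3 hS2 hS3 (hc12 ▸ hc13)).1
  simp only [Msd, Set.mem_setOf_eq] at hx12 hx13 hx23
  tauto

lemma ite_pair {p q : Prop} [Decidable p] [Decidable q] (h : (p ∧ ¬q) ∨ (q ∧ ¬p)) :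
    (if p then (1:ℕ) else 0) + (if q then 1 else 0) = 1 := by
  rcases h with ⟨h1, h2⟩ | ⟨h1, h2⟩ <;> simp [h1, h2]

lemma count_two (hred : alphaOn P (↑W₁ : Set V)ᶜ < alphaOn P Set.univ)
    (c : V → ZMod 2) {x y : V} (hxy : c x = c y)
    (hc : ∀ a b, P.Adj a b → (s(a,b) : Sym2 V) ≠ s(x,y) → c a ≠ c b)
    {z1 z2 z3 z4 : V}
    (h12 : z1 ≠ z2) (h13 : z1 ≠ z3) (h14 : z1 ≠ z4)
    (h23 : z2 ≠ z3) (h24 : z2 ≠ z4) (h34 : z3 ≠ z4)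
    (hW1 : z1 ∈ W₁) (hW2 : z2 ∈ W₁) (hW3 : z3 ∈ W₁) (hW4 : z4 ∈ W₁)
    {S1 S2 S3 S4 : Finset V} (hS1 : Priv P W₁ z1 S1) (hS2 : Priv P W₁ z2 S2)
    (hS3 : Priv P W₁ z3 S3) (hS4 : Priv P W₁ z4 S4) :
    (if x ∈ S1 then (1:ℕ) else 0) + (if x ∈ S2 then 1 else 0) +
      (if x ∈ S3 then 1 else 0) + (if x ∈ S4 then 1 else 0) = 2 := by
  by_cases hc12 : c z1 = c z2
  · by_cases hc13 : c z1 = c z3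
    · exact (no_three_same hred c hxy hc h12 h13 h23 hW1 hW2 hW3 hS1 hS2 hS3 hc12 hc13).elim
    · by_cases hc14 : c z1 = c z4
      · exact (no_three_same hred c hxy hc h12 h14 h24 hW1 hW2 hW4 hS1 hS2 hS4 hc12 hc14).elim
      · have hc34 : c z3 = c z4 := by
          have e3 := zmod2_ne (fun h => hc13 h.symm)
          have e4 := zmod2_ne (fun h => hc14 h.symm)
          rw [e3, e4]
        have e1 := ite_pair
          ((same_color_cross hred c hxy hc h12 hW1 hW2 hS1 hS2 hc12).1)
        have e2 := ite_pair
          ((same_color_cross hred c hxy hc h34 hW3 hW4 hS3 hS4 hc34).1)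
        omega
  · by_cases hc13 : c z1 = c z3
    · by_cases hc24 : c z2 = c z4
      · have e1 := ite_pair
          ((same_color_cross hred c hxy hc h13 hW1 hW3 hS1 hS3 hc13).1)
        have e2 := ite_pair
          ((same_color_cross hred c hxy hc h24 hW2 hW4 hS2 hS4 hc24).1)
        omega
      · have hc14 : c z1 = c z4 := by
          have e2 := zmod2_ne (fun h => hc12 h.symm)
          have e4 := zmod2_ne (fun h => hc24 h.symm)
          rw [e4, e2]
          have : ∀ a : ZMod 2, a + 1 + 1 = a := by decide
          exact (this _).symm
        exact (no_three_same hred c hxy hc h13 h14 h34 hW1 hW3 hW4 hS1 hS3 hS4 hc13 hc14).elim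
    · have hc23 : c z2 = c z3 := by
        have e2 := zmod2_ne (fun h => hc12 h.symm)
        have e3 := zmod2_ne (fun h => hc13 h.symm)
        rw [e2, e3]
      by_cases hc14 : c z1 = c z4
      · have e1 := ite_pair
          ((same_color_cross hred c hxy hc h14 hW1 hW4 hS1 hS4 hc14).1)
        have e2 := ite_pair
          ((same_color_cross hred c hxy hc h23 hW2 hW3 hS2 hS3 hc23).1)
        omega
      · have hc24 : c z2 = c z4 := by
          have e2 := zmod2_ne (fun h => hc12 h.symm)
          have e4 := zmod2_ne (fun h => hc14 h.symm)
          rw [e2, e4]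
        exact (no_three_same hred c hxy hc h23 h24 h34 hW2 hW3 hW4 hS2 hS3 hS4 hc23 hc24).elim

end Main

theorem stmt6 {V : Type*} [Fintype V] (P : SimpleGraph V)
    (hconn : P.Connected) (hedge : P.edgeSet.ncard ≤ Fintype.card V) (Z : Set V)
    (h : alphaOn P Zᶜ < alphaOn P Set.univ) :
    ∃ u ∈ Z, ∃ v ∈ Z, ∃ w ∈ Z,
      alphaOn P ({u, v, w} : Set V)ᶜ < alphaOn P Set.univ := by
  classical
  have hfam : ∃ n : ℕ, ∃ W : Finset V, ↑W ⊆ Z ∧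
      alphaOn P (↑W : Set V)ᶜ < alphaOn P Set.univ ∧ W.card = n := by
    refine ⟨(Set.toFinite Z).toFinset.card, (Set.toFinite Z).toFinset, ?_, ?_, rfl⟩
    · rw [Set.Finite.coe_toFinset]
    · rw [Set.Finite.coe_toFinset]
      exact h
  obtain ⟨W₁, hW₁Z, hW₁red, hW₁card⟩ := Nat.find_spec hfam
  have hmin : ∀ (W' : Finset V), ↑W' ⊆ Z →
      alphaOn P (↑W' : Set V)ᶜ < alphaOn P Set.univ → W₁.card ≤ W'.card := by
    intro W' h1 h2
    rw [hW₁card]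
    exact Nat.find_min' hfam ⟨W', h1, h2, rfl⟩
  have hpriv : ∀ z ∈ W₁, ∃ S : Finset V, Priv P W₁ z S := by
    intro z hz
    have hcard_lt : (W₁.erase z).card < W₁.card := Finset.card_erase_lt_of_mem hz
    have hsubZ : ↑(W₁.erase z) ⊆ Z := by
      intro v hv
      exact hW₁Z (Finset.mem_coe.mpr (Finset.mem_of_mem_erase (Finset.mem_coe.mp hv)))
    have hnotred : ¬ (alphaOn P (↑(W₁.erase z) : Set V)ᶜ < alphaOn P Set.univ) := by
      intro hcon
      have := hmin _ hsubZ hcon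
      omega
    have hle : alphaOn P (↑(W₁.erase z) : Set V)ᶜ ≤ alphaOn P Set.univ :=
      alphaOn_mono (Set.subset_univ _)
    have heq : alphaOn P (↑(W₁.erase z) : Set V)ᶜ = alphaOn P Set.univ := by omega
    obtain ⟨S, hsub, hind, hcard⟩ := alphaOn_exists (G := P) (A := (↑(W₁.erase z) : Set V)ᶜ)
    rw [heq] at hcard
    have honly : ∀ v ∈ S, v ∈ W₁ → v = z := by
      intro v hvS hvW
      have hvc := hsub (Finset.mem_coe.mpr hvS)
      simp only [Set.mem_compl_iff, Finset.mem_coe] at hvc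
      by_contra hvz
      exact hvc (Finset.mem_erase.mpr ⟨hvz, hvW⟩)
    have hzS : z ∈ S := by
      by_contra hzS
      obtain ⟨v, hvS, hvW⟩ := meets_of_reducing hW₁red hind hcard
      exact hzS (honly v hvS hvW ▸ hvS)
    exact ⟨S, hind, hcard, hzS, honly⟩
  by_cases hsmall : W₁.card ≤ 3
  · have hne : W₁.Nonempty := by
      rcases Finset.eq_empty_or_nonempty W₁ with rfl | hne
      · exfalso
        simp only [Finset.coe_empty, Set.compl_empty] at hW₁red
        omega
      · exact hne
    obtain ⟨u, hu⟩ := hne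
    have huZ : u ∈ Z := hW₁Z hu
    have hfinish : ∀ u' v' w' : V, (↑W₁ : Set V) ⊆ {u', v', w'} →
        alphaOn P ({u', v', w'} : Set V)ᶜ < alphaOn P Set.univ := by
      intro u' v' w' hsub
      have := alphaOn_mono (G := P) (Set.compl_subset_compl.mpr hsub)
      omega
    rcases Finset.eq_empty_or_nonempty (W₁.erase u) with hR1 | ⟨v, hv⟩
    · refine ⟨u, huZ, u, huZ, u, huZ, hfinish u u u ?_⟩
      intro t ht
      have htW : t ∈ W₁ := Finset.mem_coe.mp ht
      by_cases htu : t = u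
      · simp [htu]
      · exfalso
        have : t ∈ W₁.erase u := Finset.mem_erase.mpr ⟨htu, htW⟩
        rw [hR1] at this
        exact absurd this (Finset.notMem_empty t)
    · have hvW : v ∈ W₁ := Finset.mem_of_mem_erase hv
      have hvZ : v ∈ Z := hW₁Z hvW
      rcases Finset.eq_empty_or_nonempty ((W₁.erase u).erase v) with hR2 | ⟨w, hw⟩
      · refine ⟨u, huZ, v, hvZ, v, hvZ, hfinish u v v ?_⟩
        intro t ht
        have htW : t ∈ W₁ := Finset.mem_coe.mp ht
        by_cases htu : t = u
        · simp [htu]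
        by_cases htv : t = v
        · simp [htv]
        exfalso
        have : t ∈ (W₁.erase u).erase v :=
          Finset.mem_erase.mpr ⟨htv, Finset.mem_erase.mpr ⟨htu, htW⟩⟩
        rw [hR2] at this
        exact absurd this (Finset.notMem_empty t)
      · have hwW : w ∈ W₁ := Finset.mem_of_mem_erase (Finset.mem_of_mem_erase hw)
        have hwZ : w ∈ Z := hW₁Z hwW
        refine ⟨u, huZ, v, hvZ, w, hwZ, hfinish u v w ?_⟩
        intro t ht
        have htW : t ∈ W₁ := Finset.mem_coe.mp ht
        by_cases htu : t = u
        · simp [htu]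
        by_cases htv : t = v
        · simp [htv]
        by_cases htw : t = w
        · simp [htw]
        exfalso
        have hmem4 : t ∈ ((W₁.erase u).erase v).erase w :=
          Finset.mem_erase.mpr ⟨htw, Finset.mem_erase.mpr ⟨htv, Finset.mem_erase.mpr ⟨htu, htW⟩⟩⟩
        have c1 : (W₁.erase u).card = W₁.card - 1 := Finset.card_erase_of_mem hu
        have c2 : ((W₁.erase u).erase v).card = (W₁.erase u).card - 1 := Finset.card_erase_of_mem hv
        have c3 : (((W₁.erase u).erase v).erase w).card = ((W₁.erase u).erase v).card - 1 :=
          Finset.card_erase_of_mem hw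
        have c4 : 0 < (((W₁.erase u).erase v).erase w).card := Finset.card_pos.mpr ⟨t, hmem4⟩
        have c5 : 0 < ((W₁.erase u).erase v).card := Finset.card_pos.mpr ⟨w, hw⟩
        have c6 : 0 < (W₁.erase u).card := Finset.card_pos.mpr ⟨v, hv⟩
        omega
  · push_neg at hsmall
    exfalso
    obtain ⟨z1, hz1⟩ := Finset.card_pos.mp (by omega : 0 < W₁.card)
    have hc1 : (W₁.erase z1).card = W₁.card - 1 := Finset.card_erase_of_mem hz1
    obtain ⟨z2, hz2e⟩ := Finset.card_pos.mp (by omega : 0 < (W₁.erase z1).card)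
    have hc2 : ((W₁.erase z1).erase z2).card = (W₁.erase z1).card - 1 := Finset.card_erase_of_mem hz2e
    obtain ⟨z3, hz3e⟩ := Finset.card_pos.mp (by omega : 0 < ((W₁.erase z1).erase z2).card)
    have hc3 : (((W₁.erase z1).erase z2).erase z3).card = ((W₁.erase z1).erase z2).card - 1 :=
      Finset.card_erase_of_mem hz3e
    obtain ⟨z4, hz4e⟩ := Finset.card_pos.mp (by omega : 0 < (((W₁.erase z1).erase z2).erase z3).card)
    have hz2 : z2 ∈ W₁ := Finset.mem_of_mem_erase hz2e
    have hz3 : z3 ∈ W₁ := Finset.mem_of_mem_erase (Finset.mem_of_mem_erase hz3e)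
    have hz4 : z4 ∈ W₁ :=
      Finset.mem_of_mem_erase (Finset.mem_of_mem_erase (Finset.mem_of_mem_erase hz4e))
    have h12 : z1 ≠ z2 := fun he => (Finset.mem_erase.mp hz2e).1 he.symm
    have h13 : z1 ≠ z3 := fun he =>
      (Finset.mem_erase.mp (Finset.mem_of_mem_erase hz3e)).1 he.symm
    have h23 : z2 ≠ z3 := fun he => (Finset.mem_erase.mp hz3e).1 he.symm
    have h14 : z1 ≠ z4 := fun he =>
      (Finset.mem_erase.mp (Finset.mem_of_mem_erase (Finset.mem_of_mem_erase hz4e))).1 he.symm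
    have h24 : z2 ≠ z4 := fun he =>
      (Finset.mem_erase.mp (Finset.mem_of_mem_erase hz4e)).1 he.symm
    have h34 : z3 ≠ z4 := fun he => (Finset.mem_erase.mp hz4e).1 he.symm
    obtain ⟨S1, hS1⟩ := hpriv z1 hz1
    obtain ⟨S2, hS2⟩ := hpriv z2 hz2
    obtain ⟨S3, hS3⟩ := hpriv z3 hz3
    obtain ⟨S4, hS4⟩ := hpriv z4 hz4
    by_cases hbip : ∃ c : V → ZMod 2, ∀ a b, P.Adj a b → c a ≠ c b
    · obtain ⟨c, hcp⟩ := hbip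
      have key : ∀ (za zb : V) (Sa Sb : Finset V), za ≠ zb → za ∈ W₁ → zb ∈ W₁ →
          Priv P W₁ za Sa → Priv P W₁ zb Sb → c za ≠ c zb := by
        intro za zb Sa Sb hab haW hbW hSa hSb hsame
        have hzaB : za ∉ Sb := priv_not_mem hSb haW hab
        obtain ⟨w, hw⟩ := pair_reach hW₁red hab haW hbW hSa hSb
        have hside := walk_parity_side hSa.indep hSb.indep w hw
        rw [if_neg hzaB, if_pos hSb.mem] at hside
        have hcol := walk_parity_proper c hcp w
        rw [hside, hsame] at hcol
        rw [zmod2_add_self] at hcol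
        exact absurd hcol (by decide)
      have k12 := key z1 z2 S1 S2 h12 hz1 hz2 hS1 hS2
      have k13 := key z1 z3 S1 S3 h13 hz1 hz3 hS1 hS3
      have k23 := key z2 z3 S2 S3 h23 hz2 hz3 hS2 hS3
      have : ∀ a b d : ZMod 2, a ≠ b → a ≠ d → b ≠ d → False := by decide
      exact this _ _ _ k12 k13 k23
    · obtain ⟨m, f, hmodd, hper, hadjf, hcol⟩ := structure_dichotomy hconn hedge hbip
      have hk2 : ∀ k, k < m →
          (if f k ∈ S1 then (1:ℕ) else 0) + (if f k ∈ S2 then 1 else 0) +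
            (if f k ∈ S3 then 1 else 0) + (if f k ∈ S4 then 1 else 0) = 2 := by
        intro k hk
        obtain ⟨c, hcexc, hcxy⟩ := hcol k hk
        exact count_two hW₁red c hcxy hcexc h12 h13 h14 h23 h24 h34 hz1 hz2 hz3 hz4
          hS1 hS2 hS3 hS4
      have hhalf : ∀ (S : Finset V), IndepF P S →
          2 * (∑ k ∈ Finset.range m, (if f k ∈ S then (1:ℕ) else 0)) ≤ m := by
        intro S hS
        have hstep : ∀ k, k < m →
            (if f k ∈ S then (1:ℕ) else 0) + (if f (k+1) ∈ S then 1 else 0) ≤ 1 := by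
          intro k hk
          have hadjk := hadjf k hk
          split_ifs with hm1 hm2
          · exact (indepF_not_adj hS hm1 hm2 hadjk).elim
          all_goals omega
        have hsum1 : ∑ k ∈ Finset.range m,
            ((if f k ∈ S then (1:ℕ) else 0) + (if f (k+1) ∈ S then 1 else 0)) ≤ m := by
          calc ∑ k ∈ Finset.range m,
              ((if f k ∈ S then (1:ℕ) else 0) + (if f (k+1) ∈ S then 1 else 0))
              ≤ ∑ _k ∈ Finset.range m, 1 :=
                Finset.sum_le_sum (fun k hk => hstep k (Finset.mem_range.mp hk))
            _ = m := by simp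
        have e1 := Finset.sum_range_succ' (fun k => if f k ∈ S then (1:ℕ) else 0) m
        have e2 := Finset.sum_range_succ (fun k => if f k ∈ S then (1:ℕ) else 0) m
        have hfm : (if f m ∈ S then (1:ℕ) else 0) = (if f 0 ∈ S then 1 else 0) := by
          rw [hper]
        rw [hfm] at e2
        rw [Finset.sum_add_distrib] at hsum1
        omega
      have hb1 := hhalf S1 hS1.indep
      have hb2 := hhalf S2 hS2.indep
      have hb3 := hhalf S3 hS3.indep
      have hb4 := hhalf S4 hS4.indep
      have htot : ∑ k ∈ Finset.range m,
          ((if f k ∈ S1 then (1:ℕ) else 0) + (if f k ∈ S2 then 1 else 0) +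
            (if f k ∈ S3 then 1 else 0) + (if f k ∈ S4 then 1 else 0)) = 2 * m := by
        rw [Finset.sum_congr rfl (fun k hk => hk2 k (Finset.mem_range.mp hk))]
        simp [Finset.sum_const, Finset.card_range, Nat.mul_comm]
      rw [Finset.sum_add_distrib, Finset.sum_add_distrib, Finset.sum_add_distrib] at htot
      obtain ⟨j, hj⟩ := hmodd
      omega
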